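/- The cost-utility rule R_{c(S)} is not range-abiding: there exists an instance (a single project j with two nonzero-cost degrees of costs ⌊(b−1)/n⌋ and b, all n voters setting lower bound ⌊(b−1)/n⌋, one voter setting upper bound b and the other n−1 voters setting upper bound ⌊(b−1)/n⌋) in which τ_j = {⌊(b−1)/n⌋} is nonempty, yet the valid set selecting the degree of cost b achieves total utility b > n·⌊(b−1)/n⌋, so the unique optimal set chooses a cost strictly exceeding max(τ_j). -/

import Mathlib

open Finset

section PBDefs

variable {V D P : Type*}

/-- A valid outcome: exactly one degree chosen per project, total cost within budget. -/
def ValidSet [DecidableEq P] (proj : D → P) (c : D → ℕ) (b : ℕ) (S : Finset D) : Prop :=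
  (∀ j : P, (S.filter fun d => proj d = j).card = 1) ∧ ∑ d ∈ S, c d ≤ b

/-- The cost of the degree of project `j` chosen in `S`. -/
def chosenCost [DecidableEq P] (proj : D → P) (c : D → ℕ) (S : Finset D) (j : P) : ℕ :=
  ∑ d ∈ S.filter (fun d => proj d = j), c d

/-- Total cardinal utility (rule `R_{|S|}`): a voter gets 1 from project `j` iff the
chosen cost is nonzero and within her bounds. -/
def cardUtilTotal [Fintype V] [Fintype P] [DecidableEq P] (proj : D → P) (c : D → ℕ)
    (l u : V → P → ℕ) (S : Finset D) : ℕ :=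
  ∑ i : V, (univ.filter fun j : P =>
    chosenCost proj c S j ≠ 0 ∧ l i j ≤ chosenCost proj c S j ∧
      chosenCost proj c S j ≤ u i j).card

/-- Total cost utility (rule `R_{c(S)}`). -/
def costUtilTotal [Fintype V] [Fintype P] [DecidableEq P] (proj : D → P) (c : D → ℕ)
    (l u : V → P → ℕ) (S : Finset D) : ℕ :=
  ∑ i : V, ∑ j : P,
    if l i j ≤ chosenCost proj c S j ∧ chosenCost proj c S j ≤ u i j then
      chosenCost proj c S j else 0

/-- Total cost-capped utility (rule `R_{ĉ(S)}`). -/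
def cappedUtilTotal [Fintype V] [Fintype P] [DecidableEq P] (proj : D → P) (c : D → ℕ)
    (l u : V → P → ℕ) (S : Finset D) : ℕ :=
  ∑ i : V, ∑ j : P,
    if chosenCost proj c S j < l i j then 0
    else if chosenCost proj c S j ≤ u i j then chosenCost proj c S j
    else u i j

/-- Total distance disutility (rule `R_{‖·‖}`): distance of the chosen cost to the
interval `[l i j, u i j]`, via truncated subtraction (`max(l-c,0)+max(c-u,0)`). -/
def disTotal [Fintype V] [Fintype P] [DecidableEq P] (proj : D → P) (c : D → ℕ)
    (l u : V → P → ℕ) (S : Finset D) : ℕ :=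
  ∑ i : V, ∑ j : P,
    ((l i j - chosenCost proj c S j) + (chosenCost proj c S j - u i j))

/-- `τ_j`: the set of costs of degrees of project `j` unanimously acceptable to all voters. -/
def tauSet [Fintype V] [Fintype D] [DecidableEq P] (proj : D → P) (c : D → ℕ)
    (l u : V → P → ℕ) (j : P) : Finset ℕ :=
  ((univ : Finset D).filter fun d => proj d = j ∧ ∀ i : V, l i j ≤ c d ∧ c d ≤ u i j).image c

/-- Disutility contribution `q(d)` of a degree `d`. -/
def qContrib [Fintype V] (proj : D → P) (c : D → ℕ) (l u : V → P → ℕ) (d : D) : ℕ :=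
  (∑ i ∈ univ.filter (fun i : V => c d < l i (proj d)), (l i (proj d) - c d))
  + ∑ i ∈ univ.filter (fun i : V => u i (proj d) < c d), (c d - u i (proj d))

end PBDefs

/-- the rule `R_{c(S)}` is not range-abiding. -/
theorem not_range_abiding_costUtil :
    ∃ (n b : ℕ), 1 ≤ n ∧ 1 ≤ b ∧
      ∀ (proj : Fin 3 → Unit) (c : Fin 3 → ℕ) (l u : Fin n → Unit → ℕ) (i₀ : Fin n),
        c 0 = 0 → c 1 = (b - 1) / n → c 2 = b →
        (∀ i, l i () = (b - 1) / n) →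
        u i₀ () = b → (∀ i, i ≠ i₀ → u i () = (b - 1) / n) →
        tauSet proj c l u () = {(b - 1) / n} ∧
        costUtilTotal proj c l u ({2} : Finset (Fin 3)) = b ∧
        n * ((b - 1) / n) < b ∧
        ValidSet proj c b ({2} : Finset (Fin 3)) ∧
        ∀ S : Finset (Fin 3), ValidSet proj c b S →
          (∀ T, ValidSet proj c b T →
            costUtilTotal proj c l u T ≤ costUtilTotal proj c l u S) →
          ∀ x ∈ tauSet proj c l u (), x < chosenCost proj c S () := by

  refine ⟨2, 3, by norm_num, by norm_num, ?_⟩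
  intro proj c l u i₀ hc0 hc1 hc2 hl hu0 hu'
  norm_num [-Fin.forall_fin_two] at hc1 hl hu'
  -- basic facts
  have hfil : ∀ S : Finset (Fin 3), S.filter (fun d => proj d = ()) = S :=
    fun S => Finset.filter_true_of_mem (fun d _ => rfl)
  have hcc : ∀ S : Finset (Fin 3), chosenCost proj c S () = ∑ d ∈ S, c d := by
    intro S; unfold chosenCost; rw [hfil]
  have hcc2 : chosenCost proj c ({2} : Finset (Fin 3)) () = 3 := by
    rw [hcc, Finset.sum_singleton, hc2]
  have hi₁ : ∃ i₁ : Fin 2, i₁ ≠ i₀ ∧ u i₁ () = 1 := by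
    fin_cases i₀
    · exact ⟨1, by decide, hu' 1 (by decide)⟩
    · exact ⟨0, by decide, hu' 0 (by decide)⟩
  obtain ⟨i₁, hi₁ne, hui₁⟩ := hi₁
  have hu_ge : ∀ i : Fin 2, 1 ≤ u i () := by
    intro i
    by_cases h : i = i₀
    · subst h; rw [hu0]; norm_num
    · rw [hu' i h]
  have htau : tauSet proj c l u () = ({1} : Finset ℕ) := by
    ext x
    unfold tauSet
    rw [Finset.mem_image, Finset.mem_singleton]
    constructor
    · rintro ⟨d, hd, rfl⟩
      simp only [Finset.mem_filter, Finset.mem_univ, true_and] at hd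
      have h' : ∀ i : Fin 2, l i () ≤ c d ∧ c d ≤ u i () := by tauto
      have hd3 : d = 0 ∨ d = 1 ∨ d = 2 := by fin_cases d <;> simp
      rcases hd3 with rfl | rfl | rfl
      · exfalso; have := (h' i₀).1; rw [hc0, hl] at this; omega
      · exact hc1
      · exfalso; have := (h' i₁).2; rw [hc2, hui₁] at this; omega
    · rintro rfl
      refine ⟨1, ?_, hc1⟩
      simp only [Finset.mem_filter, Finset.mem_univ, true_and]
      have : proj 1 = () ∧ ∀ i : Fin 2, l i () ≤ c 1 ∧ c 1 ≤ u i () :=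
        ⟨rfl, fun i => by rw [hc1, hl]; exact ⟨le_refl _, hu_ge i⟩⟩
      exact this.2
  have hcost : ∀ k : Fin 3, costUtilTotal proj c l u ({k} : Finset (Fin 3)) =
      ∑ i : Fin 2, if l i () ≤ c k ∧ c k ≤ u i () then c k else 0 := by
    intro k
    unfold costUtilTotal
    refine Finset.sum_congr rfl (fun i _ => ?_)
    rw [Fintype.sum_unique]
    rw [hcc, Finset.sum_singleton]
  have hcost0 : costUtilTotal proj c l u ({0} : Finset (Fin 3)) = 0 := by
    rw [hcost]
    refine Finset.sum_eq_zero (fun i _ => ?_)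
    rw [hc0, hl]; norm_num
  have hcost1 : costUtilTotal proj c l u ({1} : Finset (Fin 3)) = 2 := by
    rw [hcost]
    have : ∀ i : Fin 2, (if l i () ≤ c 1 ∧ c 1 ≤ u i () then c 1 else 0) = 1 := by
      intro i; rw [hc1, hl, if_pos ⟨le_refl _, hu_ge i⟩]
    simp [this]
  have hcost2 : costUtilTotal proj c l u ({2} : Finset (Fin 3)) = 3 := by
    rw [hcost]
    have key : ∀ i : Fin 2, (if l i () ≤ c 2 ∧ c 2 ≤ u i () then c 2 else 0) =
        if i = i₀ then 3 else 0 := by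
      intro i
      by_cases h : i = i₀
      · subst h; rw [hc2, hl, hu0, if_pos (by norm_num), if_pos rfl]
      · rw [hc2, hl, hu' i h, if_neg (by omega), if_neg h]
    rw [Finset.sum_congr rfl (fun i _ => key i), Finset.sum_ite_eq' univ i₀ (fun _ => 3),
      if_pos (Finset.mem_univ _)]
  have hvalid : ∀ S : Finset (Fin 3), ValidSet proj c 3 S ↔ (S.card = 1 ∧ ∑ d ∈ S, c d ≤ 3) := by
    intro S
    unfold ValidSet
    constructor
    · rintro ⟨h1, h2⟩; exact ⟨by have := h1 (); rwa [hfil] at this, h2⟩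
    · rintro ⟨h1, h2⟩; exact ⟨fun j => by rw [hfil]; exact h1, h2⟩
  have hvalid2 : ValidSet proj c 3 ({2} : Finset (Fin 3)) := by
    rw [hvalid]
    refine ⟨Finset.card_singleton _, ?_⟩
    rw [Finset.sum_singleton, hc2]
  refine ⟨htau, hcost2, by norm_num, hvalid2, ?_⟩
  intro S hS hopt x hx
  rw [htau, Finset.mem_singleton] at hx
  subst hx
  have h3 := hopt _ hvalid2
  rw [hcost2] at h3
  obtain ⟨a, ha⟩ := Finset.card_eq_one.mp ((hvalid S).mp hS).1
  subst ha
  have ha3 : a = 0 ∨ a = 1 ∨ a = 2 := by fin_cases a <;> simp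
  rcases ha3 with rfl | rfl | rfl
  · rw [hcost0] at h3; omega
  · rw [hcost1] at h3; omega
  · rw [hcc2]; norm_num
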